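/- The quotient S_{Q, ⟨i⟩, ⟨i⟩}/conj has exactly 2 elements, represented by (⟨i⟩, ⟨i⟩, [1]) and (Q, Q, [1]); in particular (⟨i⟩, ⟨i⟩, [1]) and (⟨i⟩, ⟨i⟩, [j]) become identified under conjugation. -/

import Mathlib

open Quaternion Pointwise

noncomputable section

instance : CharZero ℍ[ℝ] := charZero_of_injective_algebraMap (algebraMap ℝ ℍ[ℝ]).injective

/-- The imaginary unit quaternion `i`. -/
def qi : ℍ[ℝ] := ⟨0,1,0,0⟩
/-- The imaginary unit quaternion `j`. -/
def qj : ℍ[ℝ] := ⟨0,0,1,0⟩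
/-- The imaginary unit quaternion `k`. -/
def qk : ℍ[ℝ] := ⟨0,0,0,1⟩
/-- The quaternion `c = (1 + i + j + k)/2`. -/
def qc : ℍ[ℝ] := (1 + qi + qj + qk) / 2
/-- The quaternion `(i + j)/√2`. -/
def qs : ℍ[ℝ] := (qi + qj) / ((Real.sqrt 2 : ℝ) : ℍ[ℝ])

lemma sqrt2_ne : ((Real.sqrt 2 : ℝ) : ℍ[ℝ]) ≠ 0 := by
  rw [ne_eq, ← Quaternion.coe_zero, Quaternion.coe_inj]
  positivity

/-- `i` as a unit of the quaternions. -/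
def ui : ℍ[ℝ]ˣ := Units.mk0 qi (by rw [ne_eq, Quaternion.ext_iff]; simp [qi])
/-- `j` as a unit of the quaternions. -/
def uj : ℍ[ℝ]ˣ := Units.mk0 qj (by rw [ne_eq, Quaternion.ext_iff]; simp [qj])
/-- `k` as a unit of the quaternions. -/
def uk : ℍ[ℝ]ˣ := Units.mk0 qk (by rw [ne_eq, Quaternion.ext_iff]; simp [qk])
/-- `c = (1+i+j+k)/2` as a unit of the quaternions. -/
def uc : ℍ[ℝ]ˣ := Units.mk0 qc
  (div_ne_zero (by rw [ne_eq, Quaternion.ext_iff]; simp; simp [qi, qj, qk]) two_ne_zero)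
/-- `(i+j)/√2` as a unit of the quaternions. -/
def us : ℍ[ℝ]ˣ := Units.mk0 qs
  (div_ne_zero (by rw [ne_eq, Quaternion.ext_iff]; simp; simp [qi, qj]) sqrt2_ne)

/-- The quaternion group `Q = ⟨i, j⟩ = {±1, ±i, ±j, ±k}`. -/
def QQ : Subgroup ℍ[ℝ]ˣ := Subgroup.closure {ui, uj}
/-- The binary tetrahedral group `2T = ⟨i, c⟩`. -/
def TT : Subgroup ℍ[ℝ]ˣ := Subgroup.closure {ui, uc}
/-- The binary octahedral group `2O = ⟨c, (i+j)/√2⟩`. -/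
def OO : Subgroup ℍ[ℝ]ˣ := Subgroup.closure {uc, us}

lemma uij : ui * uj = uk := by
  apply Units.ext
  show qi * qj = qk
  ext <;> simp <;> simp [qi, qj, qk]

lemma uii : ui * ui = -1 := by
  apply Units.ext
  show qi * qi = ((-1 : ℍ[ℝ]ˣ) : ℍ[ℝ])
  rw [Units.val_neg, Units.val_one]
  ext <;> simp <;> simp [qi]

lemma hui : ui ∈ QQ := Subgroup.subset_closure (by simp)
lemma huj : uj ∈ QQ := Subgroup.subset_closure (by simp)
lemma huk : uk ∈ QQ := uij ▸ mul_mem hui huj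
lemma hneg1 : (-1 : ℍ[ℝ]ˣ) ∈ QQ := uii ▸ mul_mem hui hui

/-- The quaternion group `Q` regarded as a group in its own right. -/
abbrev GQ := ↥QQ

/-- `i` as an element of the quaternion group `Q`. -/
def iQ : GQ := ⟨ui, hui⟩
/-- `j` as an element of the quaternion group `Q`. -/
def jQ : GQ := ⟨uj, huj⟩
/-- `k` as an element of the quaternion group `Q`. -/
def kQ : GQ := ⟨uk, huk⟩
/-- `-1` as an element of the quaternion group `Q`. -/
def negOneQ : GQ := ⟨-1, hneg1⟩

/-- The cyclic subgroup `⟨i⟩ = {±1, ±i}` of `Q`. -/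
def Ii : Subgroup GQ := Subgroup.zpowers iQ
/-- The cyclic subgroup `⟨j⟩ = {±1, ±j}` of `Q`. -/
def Jj : Subgroup GQ := Subgroup.zpowers jQ
/-- The cyclic subgroup `⟨k⟩ = {±1, ±k}` of `Q`. -/
def Kk : Subgroup GQ := Subgroup.zpowers kQ
/-- The cyclic subgroup `⟨-1⟩ = {±1}` of `Q`. -/
def N1 : Subgroup GQ := Subgroup.zpowers negOneQ

/-- The subset `⟨i⟩ ⊆ Q`. -/
def Si : Set GQ := ↑Ii

/-- The conditions on a triple `(H, N, g)` defining membership in `S_{G,S,S'}`: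
`N` is a normal subgroup of `H`, `gSg⁻¹ ⊆ H`, `gS'g⁻¹ ⊆ N`, and there is a finite
subset `T ⊆ N` with `⟨gSg⁻¹ ∪ T⟩ = H` whose normal closure in `H` is `N`. -/
def IsAdmissible {G : Type*} [Group G] (S S' : Set G) (H N : Subgroup G) (g : G) : Prop :=
  N ≤ H ∧ (∀ h ∈ H, ∀ n ∈ N, h * n * h⁻¹ ∈ N) ∧
  (fun s => g * s * g⁻¹) '' S ⊆ (H : Set G) ∧
  (fun s => g * s * g⁻¹) '' S' ⊆ (N : Set G) ∧
  ∃ T : Finset G, (T : Set G) ⊆ (N : Set G) ∧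
    Subgroup.closure ((fun s => g * s * g⁻¹) '' S ∪ (T : Set G)) = H ∧
    Subgroup.closure {x | ∃ h ∈ H, ∃ t ∈ T, x = h * t * h⁻¹} = N

/-- The double coset `N g C_G(S)` of `g` in `N\G/C_G(S)`, recorded as a subset of `G`. -/
def dcoset {G : Type*} [Group G] (S : Set G) (N : Subgroup G) (g : G) : Set G :=
  (N : Set G) * {g} * ↑(Subgroup.centralizer S)

/-- The set `S_{G,S,S'}` of triples `(H, N, [g])`, where the double coset
`[g] ∈ N\G/C_G(S)` is recorded as the subset `N g C_G(S)` of `G`. -/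
def STriples {G : Type*} [Group G] (S S' : Set G) : Set (Subgroup G × Subgroup G × Set G) :=
  {p | ∃ g : G, p.2.2 = dcoset S p.2.1 g ∧ IsAdmissible S S' p.1 p.2.1 g}

/-- The conjugation action of `x ∈ G` on triples `(H, N, [g])`:
it sends `(H, N, [g])` to `(xHx⁻¹, xNx⁻¹, [xg])`; on the double coset recorded as
the subset `N g C_G(S)` of `G` this is left translation by `x`. -/
def conjTriple {G : Type*} [Group G] (x : G) (p : Subgroup G × Subgroup G × Set G) :
    Subgroup G × Subgroup G × Set G :=
  (p.1.map (MulAut.conj x).toMonoidHom, p.2.1.map (MulAut.conj x).toMonoidHom,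
    (fun y => x * y) '' p.2.2)


lemma ujj : uj * uj = -1 := by
  apply Units.ext; show qj * qj = ((-1 : ℍ[ℝ]ˣ) : ℍ[ℝ])
  rw [Units.val_neg, Units.val_one]; ext <;> simp <;> simp [qj]
lemma ukk : uk * uk = -1 := by
  apply Units.ext; show qk * qk = ((-1 : ℍ[ℝ]ˣ) : ℍ[ℝ])
  rw [Units.val_neg, Units.val_one]; ext <;> simp <;> simp [qk]
lemma uji : uj * ui = -uk := by
  apply Units.ext; show qj * qi = ((-uk : ℍ[ℝ]ˣ) : ℍ[ℝ])
  rw [Units.val_neg]; show qj * qi = -qk; ext <;> simp <;> simp [qi, qj, qk]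
lemma uik : ui * uk = -uj := by
  apply Units.ext; show qi * qk = ((-uj : ℍ[ℝ]ˣ) : ℍ[ℝ])
  rw [Units.val_neg]; show qi * qk = -qj; ext <;> simp <;> simp [qi, qj, qk]
lemma uki : uk * ui = uj := by
  apply Units.ext; show qk * qi = qj; ext <;> simp <;> simp [qi, qj, qk]
lemma ujk : uj * uk = ui := by
  apply Units.ext; show qj * qk = qi; ext <;> simp <;> simp [qi, qj, qk]
lemma ukj : uk * uj = -ui := by
  apply Units.ext; show qk * qj = ((-ui : ℍ[ℝ]ˣ) : ℍ[ℝ])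
  rw [Units.val_neg]; show qk * qj = -qi; ext <;> simp <;> simp [qi, qj, qk]

lemma uinv : ui⁻¹ = -ui := by
  apply inv_eq_of_mul_eq_one_right; rw [mul_neg, uii, neg_neg]
lemma ujnv : uj⁻¹ = -uj := by
  apply inv_eq_of_mul_eq_one_right; rw [mul_neg, ujj, neg_neg]
lemma uknv : uk⁻¹ = -uk := by
  apply inv_eq_of_mul_eq_one_right; rw [mul_neg, ukk, neg_neg]

/-- The 8-element set. -/
def E8 : Set ℍ[ℝ]ˣ := {1, -1, ui, -ui, uj, -uj, uk, -uk}

lemma mem_1 : (1 : ℍ[ℝ]ˣ) ∈ E8 := Set.mem_insert _ _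
lemma mem_n1 : (-1 : ℍ[ℝ]ˣ) ∈ E8 := Set.mem_insert_of_mem _ (Set.mem_insert _ _)
lemma mem_i : ui ∈ E8 := Set.mem_insert_of_mem _ (Set.mem_insert_of_mem _ (Set.mem_insert _ _))
lemma mem_ni : (-ui) ∈ E8 := Set.mem_insert_of_mem _ (Set.mem_insert_of_mem _ (Set.mem_insert_of_mem _ (Set.mem_insert _ _)))
lemma mem_j : uj ∈ E8 := Set.mem_insert_of_mem _ (Set.mem_insert_of_mem _ (Set.mem_insert_of_mem _ (Set.mem_insert_of_mem _ (Set.mem_insert _ _))))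
lemma mem_nj : (-uj) ∈ E8 := Set.mem_insert_of_mem _ (Set.mem_insert_of_mem _ (Set.mem_insert_of_mem _ (Set.mem_insert_of_mem _ (Set.mem_insert_of_mem _ (Set.mem_insert _ _)))))
lemma mem_k : uk ∈ E8 := Set.mem_insert_of_mem _ (Set.mem_insert_of_mem _ (Set.mem_insert_of_mem _ (Set.mem_insert_of_mem _ (Set.mem_insert_of_mem _ (Set.mem_insert_of_mem _ (Set.mem_insert _ _))))))
lemma mem_nk : (-uk) ∈ E8 := Set.mem_insert_of_mem _ (Set.mem_insert_of_mem _ (Set.mem_insert_of_mem _ (Set.mem_insert_of_mem _ (Set.mem_insert_of_mem _ (Set.mem_insert_of_mem _ (Set.mem_insert_of_mem _ (Set.mem_singleton _)))))))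

lemma E8_mul : ∀ a ∈ E8, ∀ b ∈ E8, a * b ∈ E8 := by
  rintro a (rfl|rfl|rfl|rfl|rfl|rfl|rfl|rfl) b (rfl|rfl|rfl|rfl|rfl|rfl|rfl|rfl)
  · rw [one_mul]
    exact mem_1
  · rw [one_mul]
    exact mem_n1
  · rw [one_mul]
    exact mem_i
  · rw [one_mul]
    exact mem_ni
  · rw [one_mul]
    exact mem_j
  · rw [one_mul]
    exact mem_nj
  · rw [one_mul]
    exact mem_k
  · rw [one_mul]
    exact mem_nk
  · rw [neg_mul, one_mul]
    exact mem_n1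
  · rw [neg_mul_neg, one_mul]
    exact mem_1
  · rw [neg_mul, one_mul]
    exact mem_ni
  · rw [neg_mul_neg, one_mul]
    exact mem_i
  · rw [neg_mul, one_mul]
    exact mem_nj
  · rw [neg_mul_neg, one_mul]
    exact mem_j
  · rw [neg_mul, one_mul]
    exact mem_nk
  · rw [neg_mul_neg, one_mul]
    exact mem_k
  · rw [mul_one]
    exact mem_i
  · rw [mul_neg, mul_one]
    exact mem_ni
  · rw [uii]
    exact mem_n1
  · rw [mul_neg, uii, neg_neg]
    exact mem_1
  · rw [uij]
    exact mem_k
  · rw [mul_neg, uij]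
    exact mem_nk
  · rw [uik]
    exact mem_nj
  · rw [mul_neg, uik, neg_neg]
    exact mem_j
  · rw [mul_one]
    exact mem_ni
  · rw [neg_mul_neg, mul_one]
    exact mem_i
  · rw [neg_mul, uii, neg_neg]
    exact mem_1
  · rw [neg_mul_neg, uii]
    exact mem_n1
  · rw [neg_mul, uij]
    exact mem_nk
  · rw [neg_mul_neg, uij]
    exact mem_k
  · rw [neg_mul, uik, neg_neg]
    exact mem_j
  · rw [neg_mul_neg, uik]
    exact mem_nj
  · rw [mul_one]
    exact mem_j
  · rw [mul_neg, mul_one]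
    exact mem_nj
  · rw [uji]
    exact mem_nk
  · rw [mul_neg, uji, neg_neg]
    exact mem_k
  · rw [ujj]
    exact mem_n1
  · rw [mul_neg, ujj, neg_neg]
    exact mem_1
  · rw [ujk]
    exact mem_i
  · rw [mul_neg, ujk]
    exact mem_ni
  · rw [mul_one]
    exact mem_nj
  · rw [neg_mul_neg, mul_one]
    exact mem_j
  · rw [neg_mul, uji, neg_neg]
    exact mem_k
  · rw [neg_mul_neg, uji]
    exact mem_nk
  · rw [neg_mul, ujj, neg_neg]
    exact mem_1
  · rw [neg_mul_neg, ujj]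
    exact mem_n1
  · rw [neg_mul, ujk]
    exact mem_ni
  · rw [neg_mul_neg, ujk]
    exact mem_i
  · rw [mul_one]
    exact mem_k
  · rw [mul_neg, mul_one]
    exact mem_nk
  · rw [uki]
    exact mem_j
  · rw [mul_neg, uki]
    exact mem_nj
  · rw [ukj]
    exact mem_ni
  · rw [mul_neg, ukj, neg_neg]
    exact mem_i
  · rw [ukk]
    exact mem_n1
  · rw [mul_neg, ukk, neg_neg]
    exact mem_1
  · rw [mul_one]
    exact mem_nk
  · rw [neg_mul_neg, mul_one]
    exact mem_k
  · rw [neg_mul, uki]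
    exact mem_nj
  · rw [neg_mul_neg, uki]
    exact mem_j
  · rw [neg_mul, ukj, neg_neg]
    exact mem_i
  · rw [neg_mul_neg, ukj]
    exact mem_ni
  · rw [neg_mul, ukk, neg_neg]
    exact mem_1
  · rw [neg_mul_neg, ukk]
    exact mem_n1

lemma E8_inv : ∀ a ∈ E8, a⁻¹ ∈ E8 := by
  rintro a (rfl|rfl|rfl|rfl|rfl|rfl|rfl|rfl)
  · rw [inv_one]; exact mem_1
  · rw [inv_neg, inv_one]; exact mem_n1
  · rw [uinv]; exact mem_ni
  · rw [inv_neg, uinv, neg_neg]; exact mem_i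
  · rw [ujnv]; exact mem_nj
  · rw [inv_neg, ujnv, neg_neg]; exact mem_j
  · rw [uknv]; exact mem_nk
  · rw [inv_neg, uknv, neg_neg]; exact mem_k

/-- The 8-element set as a subgroup. -/
def E8sub : Subgroup ℍ[ℝ]ˣ where
  carrier := E8
  one_mem' := mem_1
  mul_mem' := fun {a b} ha hb => E8_mul a ha b hb
  inv_mem' := fun {a} ha => E8_inv a ha

lemma neg_mem_QQ {x : ℍ[ℝ]ˣ} (h : x ∈ QQ) : -x ∈ QQ :=
  neg_one_mul x ▸ mul_mem hneg1 h

lemma QQ_eq_E8 (x : ℍ[ℝ]ˣ) : x ∈ QQ ↔ x ∈ E8 := by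
  constructor
  · intro h
    have : QQ ≤ E8sub := by
      rw [QQ, Subgroup.closure_le]
      rintro y (rfl | rfl)
      · exact mem_i
      · exact mem_j
    exact this h
  · rintro (rfl | rfl | rfl | rfl | rfl | rfl | rfl | rfl)
    · exact one_mem QQ
    · exact hneg1
    · exact hui
    · exact neg_mem_QQ hui
    · exact huj
    · exact neg_mem_QQ huj
    · exact huk
    · exact neg_mem_QQ huk

/-- `-i` as an element of `Q`. -/
def niQ : GQ := ⟨-ui, neg_mem_QQ hui⟩
/-- `-j` as an element of `Q`. -/
def njQ : GQ := ⟨-uj, neg_mem_QQ huj⟩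
/-- `-k` as an element of `Q`. -/
def nkQ : GQ := ⟨-uk, neg_mem_QQ huk⟩

lemma GQ_cases (a : GQ) : a = 1 ∨ a = negOneQ ∨ a = iQ ∨ a = niQ ∨
    a = jQ ∨ a = njQ ∨ a = kQ ∨ a = nkQ := by
  obtain ⟨x, hx⟩ := a
  rcases (QQ_eq_E8 x).1 hx with rfl | rfl | rfl | rfl | rfl | rfl | rfl | rfl
  · exact Or.inl (Subtype.ext rfl)
  · exact Or.inr (Or.inl (Subtype.ext rfl))
  · exact Or.inr (Or.inr (Or.inl (Subtype.ext rfl)))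
  · exact Or.inr (Or.inr (Or.inr (Or.inl (Subtype.ext rfl))))
  · exact Or.inr (Or.inr (Or.inr (Or.inr (Or.inl (Subtype.ext rfl)))))
  · exact Or.inr (Or.inr (Or.inr (Or.inr (Or.inr (Or.inl (Subtype.ext rfl))))))
  · exact Or.inr (Or.inr (Or.inr (Or.inr (Or.inr (Or.inr (Or.inl (Subtype.ext rfl)))))))
  · exact Or.inr (Or.inr (Or.inr (Or.inr (Or.inr (Or.inr (Or.inr (Subtype.ext rfl)))))))

lemma gm_one_one : (1 : GQ) * (1 : GQ) = (1 : GQ) := Subtype.ext (by show (1 : ℍ[ℝ]ˣ) * (1 : ℍ[ℝ]ˣ) = (1 : ℍ[ℝ]ˣ); rw [one_mul])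
lemma gm_one_n1 : (1 : GQ) * negOneQ = negOneQ := Subtype.ext (by show (1 : ℍ[ℝ]ˣ) * (-1 : ℍ[ℝ]ˣ) = (-1 : ℍ[ℝ]ˣ); rw [one_mul])
lemma gm_one_i : (1 : GQ) * iQ = iQ := Subtype.ext (by show (1 : ℍ[ℝ]ˣ) * ui = ui; rw [one_mul])
lemma gm_one_ni : (1 : GQ) * niQ = niQ := Subtype.ext (by show (1 : ℍ[ℝ]ˣ) * (-ui) = (-ui); rw [one_mul])
lemma gm_one_j : (1 : GQ) * jQ = jQ := Subtype.ext (by show (1 : ℍ[ℝ]ˣ) * uj = uj; rw [one_mul])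
lemma gm_one_nj : (1 : GQ) * njQ = njQ := Subtype.ext (by show (1 : ℍ[ℝ]ˣ) * (-uj) = (-uj); rw [one_mul])
lemma gm_one_k : (1 : GQ) * kQ = kQ := Subtype.ext (by show (1 : ℍ[ℝ]ˣ) * uk = uk; rw [one_mul])
lemma gm_one_nk : (1 : GQ) * nkQ = nkQ := Subtype.ext (by show (1 : ℍ[ℝ]ˣ) * (-uk) = (-uk); rw [one_mul])
lemma gm_n1_one : negOneQ * (1 : GQ) = negOneQ := Subtype.ext (by show (-1 : ℍ[ℝ]ˣ) * (1 : ℍ[ℝ]ˣ) = (-1 : ℍ[ℝ]ˣ); rw [neg_mul, one_mul])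
lemma gm_n1_n1 : negOneQ * negOneQ = (1 : GQ) := Subtype.ext (by show (-1 : ℍ[ℝ]ˣ) * (-1 : ℍ[ℝ]ˣ) = (1 : ℍ[ℝ]ˣ); rw [neg_mul_neg, one_mul])
lemma gm_n1_i : negOneQ * iQ = niQ := Subtype.ext (by show (-1 : ℍ[ℝ]ˣ) * ui = (-ui); rw [neg_mul, one_mul])
lemma gm_n1_ni : negOneQ * niQ = iQ := Subtype.ext (by show (-1 : ℍ[ℝ]ˣ) * (-ui) = ui; rw [neg_mul_neg, one_mul])
lemma gm_n1_j : negOneQ * jQ = njQ := Subtype.ext (by show (-1 : ℍ[ℝ]ˣ) * uj = (-uj); rw [neg_mul, one_mul])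
lemma gm_n1_nj : negOneQ * njQ = jQ := Subtype.ext (by show (-1 : ℍ[ℝ]ˣ) * (-uj) = uj; rw [neg_mul_neg, one_mul])
lemma gm_n1_k : negOneQ * kQ = nkQ := Subtype.ext (by show (-1 : ℍ[ℝ]ˣ) * uk = (-uk); rw [neg_mul, one_mul])
lemma gm_n1_nk : negOneQ * nkQ = kQ := Subtype.ext (by show (-1 : ℍ[ℝ]ˣ) * (-uk) = uk; rw [neg_mul_neg, one_mul])
lemma gm_i_one : iQ * (1 : GQ) = iQ := Subtype.ext (by show ui * (1 : ℍ[ℝ]ˣ) = ui; rw [mul_one])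
lemma gm_i_n1 : iQ * negOneQ = niQ := Subtype.ext (by show ui * (-1 : ℍ[ℝ]ˣ) = (-ui); rw [mul_neg, mul_one])
lemma gm_i_i : iQ * iQ = negOneQ := Subtype.ext (by show ui * ui = (-1 : ℍ[ℝ]ˣ); rw [uii])
lemma gm_i_ni : iQ * niQ = (1 : GQ) := Subtype.ext (by show ui * (-ui) = (1 : ℍ[ℝ]ˣ); rw [mul_neg, uii, neg_neg])
lemma gm_i_j : iQ * jQ = kQ := Subtype.ext (by show ui * uj = uk; rw [uij])
lemma gm_i_nj : iQ * njQ = nkQ := Subtype.ext (by show ui * (-uj) = (-uk); rw [mul_neg, uij])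
lemma gm_i_k : iQ * kQ = njQ := Subtype.ext (by show ui * uk = (-uj); rw [uik])
lemma gm_i_nk : iQ * nkQ = jQ := Subtype.ext (by show ui * (-uk) = uj; rw [mul_neg, uik, neg_neg])
lemma gm_ni_one : niQ * (1 : GQ) = niQ := Subtype.ext (by show (-ui) * (1 : ℍ[ℝ]ˣ) = (-ui); rw [mul_one])
lemma gm_ni_n1 : niQ * negOneQ = iQ := Subtype.ext (by show (-ui) * (-1 : ℍ[ℝ]ˣ) = ui; rw [neg_mul_neg, mul_one])
lemma gm_ni_i : niQ * iQ = (1 : GQ) := Subtype.ext (by show (-ui) * ui = (1 : ℍ[ℝ]ˣ); rw [neg_mul, uii, neg_neg])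
lemma gm_ni_ni : niQ * niQ = negOneQ := Subtype.ext (by show (-ui) * (-ui) = (-1 : ℍ[ℝ]ˣ); rw [neg_mul_neg, uii])
lemma gm_ni_j : niQ * jQ = nkQ := Subtype.ext (by show (-ui) * uj = (-uk); rw [neg_mul, uij])
lemma gm_ni_nj : niQ * njQ = kQ := Subtype.ext (by show (-ui) * (-uj) = uk; rw [neg_mul_neg, uij])
lemma gm_ni_k : niQ * kQ = jQ := Subtype.ext (by show (-ui) * uk = uj; rw [neg_mul, uik, neg_neg])
lemma gm_ni_nk : niQ * nkQ = njQ := Subtype.ext (by show (-ui) * (-uk) = (-uj); rw [neg_mul_neg, uik])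
lemma gm_j_one : jQ * (1 : GQ) = jQ := Subtype.ext (by show uj * (1 : ℍ[ℝ]ˣ) = uj; rw [mul_one])
lemma gm_j_n1 : jQ * negOneQ = njQ := Subtype.ext (by show uj * (-1 : ℍ[ℝ]ˣ) = (-uj); rw [mul_neg, mul_one])
lemma gm_j_i : jQ * iQ = nkQ := Subtype.ext (by show uj * ui = (-uk); rw [uji])
lemma gm_j_ni : jQ * niQ = kQ := Subtype.ext (by show uj * (-ui) = uk; rw [mul_neg, uji, neg_neg])
lemma gm_j_j : jQ * jQ = negOneQ := Subtype.ext (by show uj * uj = (-1 : ℍ[ℝ]ˣ); rw [ujj])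
lemma gm_j_nj : jQ * njQ = (1 : GQ) := Subtype.ext (by show uj * (-uj) = (1 : ℍ[ℝ]ˣ); rw [mul_neg, ujj, neg_neg])
lemma gm_j_k : jQ * kQ = iQ := Subtype.ext (by show uj * uk = ui; rw [ujk])
lemma gm_j_nk : jQ * nkQ = niQ := Subtype.ext (by show uj * (-uk) = (-ui); rw [mul_neg, ujk])
lemma gm_nj_one : njQ * (1 : GQ) = njQ := Subtype.ext (by show (-uj) * (1 : ℍ[ℝ]ˣ) = (-uj); rw [mul_one])
lemma gm_nj_n1 : njQ * negOneQ = jQ := Subtype.ext (by show (-uj) * (-1 : ℍ[ℝ]ˣ) = uj; rw [neg_mul_neg, mul_one])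
lemma gm_nj_i : njQ * iQ = kQ := Subtype.ext (by show (-uj) * ui = uk; rw [neg_mul, uji, neg_neg])
lemma gm_nj_ni : njQ * niQ = nkQ := Subtype.ext (by show (-uj) * (-ui) = (-uk); rw [neg_mul_neg, uji])
lemma gm_nj_j : njQ * jQ = (1 : GQ) := Subtype.ext (by show (-uj) * uj = (1 : ℍ[ℝ]ˣ); rw [neg_mul, ujj, neg_neg])
lemma gm_nj_nj : njQ * njQ = negOneQ := Subtype.ext (by show (-uj) * (-uj) = (-1 : ℍ[ℝ]ˣ); rw [neg_mul_neg, ujj])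
lemma gm_nj_k : njQ * kQ = niQ := Subtype.ext (by show (-uj) * uk = (-ui); rw [neg_mul, ujk])
lemma gm_nj_nk : njQ * nkQ = iQ := Subtype.ext (by show (-uj) * (-uk) = ui; rw [neg_mul_neg, ujk])
lemma gm_k_one : kQ * (1 : GQ) = kQ := Subtype.ext (by show uk * (1 : ℍ[ℝ]ˣ) = uk; rw [mul_one])
lemma gm_k_n1 : kQ * negOneQ = nkQ := Subtype.ext (by show uk * (-1 : ℍ[ℝ]ˣ) = (-uk); rw [mul_neg, mul_one])
lemma gm_k_i : kQ * iQ = jQ := Subtype.ext (by show uk * ui = uj; rw [uki])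
lemma gm_k_ni : kQ * niQ = njQ := Subtype.ext (by show uk * (-ui) = (-uj); rw [mul_neg, uki])
lemma gm_k_j : kQ * jQ = niQ := Subtype.ext (by show uk * uj = (-ui); rw [ukj])
lemma gm_k_nj : kQ * njQ = iQ := Subtype.ext (by show uk * (-uj) = ui; rw [mul_neg, ukj, neg_neg])
lemma gm_k_k : kQ * kQ = negOneQ := Subtype.ext (by show uk * uk = (-1 : ℍ[ℝ]ˣ); rw [ukk])
lemma gm_k_nk : kQ * nkQ = (1 : GQ) := Subtype.ext (by show uk * (-uk) = (1 : ℍ[ℝ]ˣ); rw [mul_neg, ukk, neg_neg])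
lemma gm_nk_one : nkQ * (1 : GQ) = nkQ := Subtype.ext (by show (-uk) * (1 : ℍ[ℝ]ˣ) = (-uk); rw [mul_one])
lemma gm_nk_n1 : nkQ * negOneQ = kQ := Subtype.ext (by show (-uk) * (-1 : ℍ[ℝ]ˣ) = uk; rw [neg_mul_neg, mul_one])
lemma gm_nk_i : nkQ * iQ = njQ := Subtype.ext (by show (-uk) * ui = (-uj); rw [neg_mul, uki])
lemma gm_nk_ni : nkQ * niQ = jQ := Subtype.ext (by show (-uk) * (-ui) = uj; rw [neg_mul_neg, uki])
lemma gm_nk_j : nkQ * jQ = iQ := Subtype.ext (by show (-uk) * uj = ui; rw [neg_mul, ukj, neg_neg])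
lemma gm_nk_nj : nkQ * njQ = niQ := Subtype.ext (by show (-uk) * (-uj) = (-ui); rw [neg_mul_neg, ukj])
lemma gm_nk_k : nkQ * kQ = (1 : GQ) := Subtype.ext (by show (-uk) * uk = (1 : ℍ[ℝ]ˣ); rw [neg_mul, ukk, neg_neg])
lemma gm_nk_nk : nkQ * nkQ = negOneQ := Subtype.ext (by show (-uk) * (-uk) = (-1 : ℍ[ℝ]ˣ); rw [neg_mul_neg, ukk])

lemma gi_one : (1 : GQ)⁻¹ = 1 := inv_one
lemma gi_n1 : negOneQ⁻¹ = negOneQ :=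
  Subtype.ext (by show (-1 : ℍ[ℝ]ˣ)⁻¹ = (-1 : ℍ[ℝ]ˣ); rw [inv_neg, inv_one])
lemma gi_i : iQ⁻¹ = niQ := Subtype.ext (by show ui⁻¹ = -ui; rw [uinv])
lemma gi_ni : niQ⁻¹ = iQ := Subtype.ext (by show (-ui)⁻¹ = ui; rw [inv_neg, uinv, neg_neg])
lemma gi_j : jQ⁻¹ = njQ := Subtype.ext (by show uj⁻¹ = -uj; rw [ujnv])
lemma gi_nj : njQ⁻¹ = jQ := Subtype.ext (by show (-uj)⁻¹ = uj; rw [inv_neg, ujnv, neg_neg])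
lemma gi_k : kQ⁻¹ = nkQ := Subtype.ext (by show uk⁻¹ = -uk; rw [uknv])
lemma gi_nk : nkQ⁻¹ = kQ := Subtype.ext (by show (-uk)⁻¹ = uk; rw [inv_neg, uknv, neg_neg])

-- inequalities
lemma gq_ne {a b : GQ} (h : ((a : ℍ[ℝ]ˣ) : ℍ[ℝ]) ≠ ((b : ℍ[ℝ]ˣ) : ℍ[ℝ])) : a ≠ b :=
  fun e => h (congrArg (fun z : GQ => ((z : ℍ[ℝ]ˣ) : ℍ[ℝ])) e)

lemma jQ_ne_one : jQ ≠ 1 := gq_ne (by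
  show qj ≠ ((1 : ℍ[ℝ]ˣ) : ℍ[ℝ]); rw [Units.val_one, ne_eq, Quaternion.ext_iff]; simp [qj])
lemma jQ_ne_n1 : jQ ≠ negOneQ := gq_ne (by
  show qj ≠ ((-1 : ℍ[ℝ]ˣ) : ℍ[ℝ]); rw [Units.val_neg, Units.val_one]
  rw [ne_eq, Quaternion.ext_iff]; simp [qj])
lemma jQ_ne_i : jQ ≠ iQ := gq_ne (by
  show qj ≠ qi; rw [ne_eq, Quaternion.ext_iff]; simp [qj, qi])
lemma jQ_ne_ni : jQ ≠ niQ := gq_ne (by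
  show qj ≠ ((-ui : ℍ[ℝ]ˣ) : ℍ[ℝ]); rw [Units.val_neg]
  show qj ≠ -qi; rw [ne_eq, Quaternion.ext_iff]; simp; simp [qj, qi])
lemma jQ_ne_nj : jQ ≠ njQ := gq_ne (by
  show qj ≠ ((-uj : ℍ[ℝ]ˣ) : ℍ[ℝ]); rw [Units.val_neg]
  show qj ≠ -qj; rw [ne_eq, Quaternion.ext_iff]; simp; norm_num [qj])
lemma kQ_ne_nk : kQ ≠ nkQ := gq_ne (by
  show qk ≠ ((-uk : ℍ[ℝ]ˣ) : ℍ[ℝ]); rw [Units.val_neg]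
  show qk ≠ -qk; rw [ne_eq, Quaternion.ext_iff]; simp; norm_num [qk])
lemma iQ_ne_one : iQ ≠ 1 := gq_ne (by
  show qi ≠ ((1 : ℍ[ℝ]ˣ) : ℍ[ℝ]); rw [Units.val_one, ne_eq, Quaternion.ext_iff]; simp [qi])
lemma iQ_ne_n1 : iQ ≠ negOneQ := gq_ne (by
  show qi ≠ ((-1 : ℍ[ℝ]ˣ) : ℍ[ℝ]); rw [Units.val_neg, Units.val_one]
  rw [ne_eq, Quaternion.ext_iff]; simp [qi])

-- Ii membership
lemma iQ_mem_Ii : iQ ∈ Ii := Subgroup.mem_zpowers _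
lemma n1_mem_Ii : negOneQ ∈ Ii := by rw [← gm_i_i]; exact mul_mem iQ_mem_Ii iQ_mem_Ii
lemma ni_mem_Ii : niQ ∈ Ii := by rw [← gm_n1_i]; exact mul_mem n1_mem_Ii iQ_mem_Ii

/-- The carrier of `⟨i⟩`. -/
def FS : Set GQ := {1, negOneQ, iQ, niQ}

lemma fm_1 : (1 : GQ) ∈ FS := Set.mem_insert _ _
lemma fm_n1 : negOneQ ∈ FS := Set.mem_insert_of_mem _ (Set.mem_insert _ _)
lemma fm_i : iQ ∈ FS := Set.mem_insert_of_mem _ (Set.mem_insert_of_mem _ (Set.mem_insert _ _))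
lemma fm_ni : niQ ∈ FS :=
  Set.mem_insert_of_mem _ (Set.mem_insert_of_mem _ (Set.mem_insert_of_mem _ (Set.mem_singleton _)))

/-- `⟨i⟩`'s carrier as a subgroup. -/
def Fsub : Subgroup GQ where
  carrier := FS
  one_mem' := fm_1
  mul_mem' := by
    rintro a b (rfl | rfl | rfl | rfl) (rfl | rfl | rfl | rfl)
    · rw [gm_one_one]; exact fm_1
    · rw [gm_one_n1]; exact fm_n1
    · rw [gm_one_i]; exact fm_i
    · rw [gm_one_ni]; exact fm_ni
    · rw [gm_n1_one]; exact fm_n1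
    · rw [gm_n1_n1]; exact fm_1
    · rw [gm_n1_i]; exact fm_ni
    · rw [gm_n1_ni]; exact fm_i
    · rw [gm_i_one]; exact fm_i
    · rw [gm_i_n1]; exact fm_ni
    · rw [gm_i_i]; exact fm_n1
    · rw [gm_i_ni]; exact fm_1
    · rw [gm_ni_one]; exact fm_ni
    · rw [gm_ni_n1]; exact fm_i
    · rw [gm_ni_i]; exact fm_1
    · rw [gm_ni_ni]; exact fm_n1
  inv_mem' := by
    rintro a (rfl | rfl | rfl | rfl)
    · rw [gi_one]; exact fm_1
    · rw [gi_n1]; exact fm_n1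
    · rw [gi_i]; exact fm_ni
    · rw [gi_ni]; exact fm_i

lemma mem_Ii_iff (a : GQ) : a ∈ Ii ↔ a = 1 ∨ a = negOneQ ∨ a = iQ ∨ a = niQ := by
  constructor
  · intro h
    have hle : Ii ≤ Fsub := Subgroup.zpowers_le.2 fm_i
    exact hle h
  · rintro (rfl | rfl | rfl | rfl)
    · exact one_mem _
    · exact n1_mem_Ii
    · exact iQ_mem_Ii
    · exact ni_mem_Ii

lemma jQ_notin_Ii : jQ ∉ Ii := by
  intro h
  rcases (mem_Ii_iff jQ).1 h with h | h | h | h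
  exacts [jQ_ne_one h, jQ_ne_n1 h, jQ_ne_i h, jQ_ne_ni h]

lemma Ii_ne_top : Ii ≠ (⊤ : Subgroup GQ) := fun h => jQ_notin_Ii (h ▸ Subgroup.mem_top jQ)

lemma iQ_mem_Si : iQ ∈ Si := iQ_mem_Ii

lemma centralizer_Si : Subgroup.centralizer Si = Ii := by
  apply le_antisymm
  · intro x hx
    have hcomm := Subgroup.mem_centralizer_iff.1 hx iQ iQ_mem_Si
    rcases GQ_cases x with rfl | rfl | rfl | rfl | rfl | rfl | rfl | rfl
    · exact one_mem _
    · exact n1_mem_Ii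
    · exact iQ_mem_Ii
    · exact ni_mem_Ii
    · rw [gm_i_j, gm_j_i] at hcomm; exact absurd hcomm kQ_ne_nk
    · rw [gm_i_nj, gm_nj_i] at hcomm; exact absurd hcomm.symm kQ_ne_nk
    · rw [gm_i_k, gm_k_i] at hcomm; exact absurd hcomm.symm jQ_ne_nj
    · rw [gm_i_nk, gm_nk_i] at hcomm; exact absurd hcomm jQ_ne_nj
  · intro x hx
    rw [Subgroup.mem_centralizer_iff]
    intro h hh
    have hh' : h ∈ Ii := hh
    obtain ⟨m, rfl⟩ := hh'
    obtain ⟨n, rfl⟩ := hx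
    rw [← zpow_add, ← zpow_add, add_comm]

lemma subgroups_above (K : Subgroup GQ) (hK : Ii ≤ K) : K = Ii ∨ K = ⊤ := by
  by_cases h : ∀ x ∈ K, x ∈ Ii
  · exact Or.inl (le_antisymm h hK)
  · right
    push_neg at h
    obtain ⟨x, hxK, hxI⟩ := h
    have hj : jQ ∈ K := by
      rcases GQ_cases x with rfl | rfl | rfl | rfl | rfl | rfl | rfl | rfl
      · exact absurd (one_mem Ii) hxI
      · exact absurd n1_mem_Ii hxI
      · exact absurd iQ_mem_Ii hxI
      · exact absurd ni_mem_Ii hxI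
      · exact hxK
      · rw [← gm_n1_nj]; exact mul_mem (hK n1_mem_Ii) hxK
      · rw [← gm_ni_k]; exact mul_mem (hK ni_mem_Ii) hxK
      · rw [← gm_i_nk]; exact mul_mem (hK iQ_mem_Ii) hxK
    rw [eq_top_iff]
    intro a _
    have hi : iQ ∈ K := hK iQ_mem_Ii
    have hn1 : negOneQ ∈ K := hK n1_mem_Ii
    rcases GQ_cases a with rfl | rfl | rfl | rfl | rfl | rfl | rfl | rfl
    · exact one_mem K
    · exact hn1
    · exact hi
    · exact hK ni_mem_Ii
    · exact hj
    · rw [← gm_n1_j]; exact mul_mem hn1 hj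
    · rw [← gm_i_j]; exact mul_mem hi hj
    · rw [← gm_n1_k]; exact mul_mem hn1 (by rw [← gm_i_j]; exact mul_mem hi hj)

lemma closure_ij_top : Subgroup.closure ({iQ, jQ} : Set GQ) = ⊤ := by
  have hi : iQ ∈ Subgroup.closure ({iQ, jQ} : Set GQ) :=
    Subgroup.subset_closure (Set.mem_insert _ _)
  have hj : jQ ∈ Subgroup.closure ({iQ, jQ} : Set GQ) :=
    Subgroup.subset_closure (Set.mem_insert_of_mem _ (Set.mem_singleton _))
  have hI : Ii ≤ Subgroup.closure ({iQ, jQ} : Set GQ) := Subgroup.zpowers_le.2 hi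
  rcases subgroups_above _ hI with h | h
  · exact absurd (h ▸ hj) jQ_notin_Ii
  · exact h

lemma conj_iQ_mem (g : GQ) : g * iQ * g⁻¹ ∈ Ii := by
  rcases GQ_cases g with rfl | rfl | rfl | rfl | rfl | rfl | rfl | rfl
  · rw [gi_one, gm_one_i, gm_i_one]; exact iQ_mem_Ii
  · rw [gi_n1, gm_n1_i, gm_ni_n1]; exact iQ_mem_Ii
  · rw [gi_i, gm_i_i, gm_n1_ni]; exact iQ_mem_Ii
  · rw [gi_ni, gm_ni_i, gm_one_i]; exact iQ_mem_Ii
  · rw [gi_j, gm_j_i, gm_nk_nj]; exact ni_mem_Ii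
  · rw [gi_nj, gm_nj_i, gm_k_j]; exact ni_mem_Ii
  · rw [gi_k, gm_k_i, gm_j_nk]; exact ni_mem_Ii
  · rw [gi_nk, gm_nk_i, gm_nj_k]; exact ni_mem_Ii

lemma conj_Ii_map (x : GQ) : Subgroup.map (MulAut.conj x).toMonoidHom Ii = Ii := by
  rw [Ii, MonoidHom.map_zpowers]
  have h1 : (MulEquiv.toMonoidHom (MulAut.conj x)) iQ = x * iQ * x⁻¹ := rfl
  rw [h1]
  apply le_antisymm
  · rw [Subgroup.zpowers_le]; exact conj_iQ_mem x
  · rw [Subgroup.zpowers_le]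
    rcases (mem_Ii_iff _).1 (conj_iQ_mem x) with h | h | h | h
    · exfalso
      have e1 : iQ = x⁻¹ * (x * iQ * x⁻¹) * x := by group
      rw [h] at e1
      exact iQ_ne_one (by simpa using e1)
    · exfalso
      have hc : ∀ y : GQ, negOneQ * y = y * negOneQ := by
        intro y
        apply Subtype.ext
        show (-1 : ℍ[ℝ]ˣ) * (y : ℍ[ℝ]ˣ) = (y : ℍ[ℝ]ˣ) * (-1 : ℍ[ℝ]ˣ)
        rw [neg_one_mul, mul_neg_one]
      have e1 : iQ = x⁻¹ * (x * iQ * x⁻¹) * x := by group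
      rw [h, ← hc x⁻¹, mul_assoc] at e1
      simp only [inv_mul_cancel, mul_one] at e1
      exact iQ_ne_n1 e1
    · rw [h]; exact Subgroup.mem_zpowers _
    · rw [h, ← gm_n1_ni, ← gm_ni_ni]
      exact mul_mem (mul_mem (Subgroup.mem_zpowers _) (Subgroup.mem_zpowers _))
        (Subgroup.mem_zpowers _)

lemma conj_top_map (x : GQ) : Subgroup.map (MulAut.conj x).toMonoidHom (⊤ : Subgroup GQ) = ⊤ := by
  rw [eq_top_iff]
  intro a _
  exact ⟨(MulAut.conj x).symm a, Subgroup.mem_top _, (MulAut.conj x).apply_symm_apply a⟩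

lemma Si_eq : Si = (Ii : Set GQ) := rfl

lemma Ii_comm {a b : GQ} (ha : a ∈ Ii) (hb : b ∈ Ii) : a * b = b * a := by
  obtain ⟨m, rfl⟩ := ha
  obtain ⟨n, rfl⟩ := hb
  rw [← zpow_add, ← zpow_add, add_comm]

lemma conj_mem_Ii {n : GQ} (g : GQ) (hn : n ∈ Ii) : g * n * g⁻¹ ∈ Ii := by
  have h : g * n * g⁻¹⁻¹⁻¹ ∈ Subgroup.map (MulEquiv.toMonoidHom (MulAut.conj g)) Ii :=
    ⟨n, hn, rfl⟩
  rw [conj_Ii_map] at h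
  rwa [inv_inv] at h

lemma leftCoset_eq {K : Subgroup GQ} {a b : GQ} (h : a⁻¹ * b ∈ K) :
    (fun y => b * y) '' (K : Set GQ) = (fun y => a * y) '' (K : Set GQ) := by
  ext x
  simp only [Set.mem_image]
  constructor
  · rintro ⟨y, hy, rfl⟩
    exact ⟨a⁻¹ * b * y, mul_mem h hy, by group⟩
  · rintro ⟨y, hy, rfl⟩
    refine ⟨b⁻¹ * a * y, mul_mem ?_ hy, by group⟩
    have := inv_mem h
    rwa [mul_inv_rev, inv_inv] at this

lemma leftCoset_self {K : Subgroup GQ} {a : GQ} (h : a ∈ K) :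
    (fun y => a * y) '' (K : Set GQ) = (K : Set GQ) := by
  ext x
  simp only [Set.mem_image]
  constructor
  · rintro ⟨y, hy, rfl⟩
    exact mul_mem h hy
  · intro hx
    exact ⟨a⁻¹ * x, mul_mem (inv_mem h) hx, by group⟩

lemma dcoset_Ii (g : GQ) : dcoset Si Ii g = (fun y => g * y) '' (Ii : Set GQ) := by
  rw [dcoset, centralizer_Si]
  ext x
  constructor
  · rintro ⟨u, hu, c, hc, rfl⟩
    obtain ⟨n, hn, g', hg', rfl⟩ := hu
    rcases hg' with rfl
    refine ⟨(g'⁻¹ * n * g') * c, mul_mem ?_ hc, by group⟩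
    have := conj_mem_Ii g'⁻¹ hn
    rwa [inv_inv] at this
  · rintro ⟨y, hy, rfl⟩
    exact ⟨(g * y * g⁻¹) * g, ⟨g * y * g⁻¹, conj_mem_Ii g hy, g, rfl, rfl⟩,
      1, one_mem Ii, by group⟩

lemma dcoset_top (g : GQ) : dcoset Si (⊤ : Subgroup GQ) g = Set.univ := by
  rw [dcoset, centralizer_Si]
  ext x
  simp only [Set.mem_univ, iff_true]
  exact ⟨x, ⟨x * g⁻¹, Subgroup.mem_top _, g, rfl, by group⟩, 1, one_mem Ii, mul_one x⟩

lemma conj_dcoset_Ii (x g : GQ) :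
    (fun y => x * y) '' dcoset Si Ii g = dcoset Si Ii (x * g) := by
  rw [dcoset_Ii, dcoset_Ii, Set.image_image]
  simp [mul_assoc]

lemma conj_dcoset_top (x g : GQ) :
    (fun y => x * y) '' dcoset Si (⊤ : Subgroup GQ) g = dcoset Si ⊤ (x * g) := by
  rw [dcoset_top, dcoset_top, Set.image_univ]
  exact Set.range_eq_univ.2 fun z => ⟨x⁻¹ * z, by group⟩

lemma adm_t1 : IsAdmissible Si Si Ii Ii 1 := by
  have himg : (fun s => (1 : GQ) * s * 1⁻¹) '' Si = Si := by simp
  refine ⟨le_refl _, ?_, ?_, ?_, ?_⟩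
  · intro h hh n hn
    rw [Ii_comm hh hn, mul_inv_cancel_right]
    exact hn
  · rw [himg, Si_eq]
  · rw [himg, Si_eq]
  · refine ⟨{iQ}, ?_, ?_, ?_⟩
    · rw [Finset.coe_singleton, Set.singleton_subset_iff]
      exact iQ_mem_Ii
    · rw [himg, Finset.coe_singleton,
        Set.union_eq_self_of_subset_right (Set.singleton_subset_iff.2 iQ_mem_Si), Si_eq,
        Subgroup.closure_eq]
    · have hset : {x : GQ | ∃ h ∈ Ii, ∃ t ∈ ({iQ} : Finset GQ), x = h * t * h⁻¹} = {iQ} := by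
        ext x
        constructor
        · rintro ⟨h, hh, t, ht, rfl⟩
          rw [Finset.mem_singleton] at ht
          subst ht
          rw [Ii_comm hh iQ_mem_Ii, mul_inv_cancel_right]
          rfl
        · rintro rfl
          exact ⟨1, one_mem Ii, iQ, Finset.mem_singleton.2 rfl, by group⟩
      rw [hset, Ii, Subgroup.zpowers_eq_closure]

lemma adm_t3 : IsAdmissible Si Si (⊤ : Subgroup GQ) ⊤ 1 := by
  classical
  refine ⟨le_refl _, fun _ _ _ _ => Subgroup.mem_top _, ?_, ?_, ?_⟩
  · rw [Subgroup.coe_top]; exact Set.subset_univ _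
  · rw [Subgroup.coe_top]; exact Set.subset_univ _
  · refine ⟨{iQ, jQ}, ?_, ?_, ?_⟩
    · rw [Subgroup.coe_top]; exact Set.subset_univ _
    · rw [eq_top_iff, ← closure_ij_top]
      apply Subgroup.closure_mono
      intro y hy
      right
      simpa using hy
    · have h2 : Subgroup.closure ({iQ, jQ} : Set GQ) ≤ Subgroup.closure
          {x : GQ | ∃ h ∈ (⊤ : Subgroup GQ), ∃ t ∈ ({iQ, jQ} : Finset GQ), x = h * t * h⁻¹} := by
        apply Subgroup.closure_mono
        rintro y (rfl | rfl)
        · exact ⟨1, Subgroup.mem_top _, iQ, by simp, by group⟩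
        · exact ⟨1, Subgroup.mem_top _, jQ, by simp, by group⟩
      apply top_unique
      calc (⊤ : Subgroup GQ) = Subgroup.closure {iQ, jQ} := closure_ij_top.symm
        _ ≤ _ := h2

lemma himg_conj (g : GQ) : (fun s => g * s * g⁻¹) '' Si = Si := by
  have h1 : (fun s => g * s * g⁻¹) '' Si =
      ↑(Subgroup.map (MulEquiv.toMonoidHom (MulAut.conj g)) Ii) := by
    rw [Subgroup.coe_map]
    rfl
  rw [h1, conj_Ii_map, Si_eq]

lemma jinv_mul_mem {g : GQ} (hg : g ∉ Ii) : jQ⁻¹ * g ∈ Ii := by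
  rw [gi_j]
  rcases GQ_cases g with rfl | rfl | rfl | rfl | rfl | rfl | rfl | rfl
  · exact absurd (one_mem Ii) hg
  · exact absurd n1_mem_Ii hg
  · exact absurd iQ_mem_Ii hg
  · exact absurd ni_mem_Ii hg
  · rw [gm_nj_j]; exact one_mem Ii
  · rw [gm_nj_nj]; exact n1_mem_Ii
  · rw [gm_nj_k]; exact ni_mem_Ii
  · rw [gm_nj_nk]; exact iQ_mem_Ii

lemma STriples_sub (p : Subgroup GQ × Subgroup GQ × Set GQ) (hp : p ∈ STriples Si Si) :
    p = (Ii, Ii, dcoset Si Ii 1) ∨ p = (Ii, Ii, dcoset Si Ii jQ) ∨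
    p = (⊤, ⊤, dcoset Si (⊤ : Subgroup GQ) 1) := by
  obtain ⟨H, N, D⟩ := p
  obtain ⟨g, hd, hNH, hnorm, himgH, himgN, T, hT, hclosH, hclosN⟩ := hp
  simp only at hd hNH hnorm himgH himgN hT hclosH hclosN ⊢
  have hIiN : Ii ≤ N := by
    intro y hy
    apply himgN
    rw [himg_conj]
    exact hy
  rcases subgroups_above N hIiN with rfl | rfl
  · rcases subgroups_above H (hIiN.trans hNH) with rfl | rfl
    · by_cases hg : g ∈ Ii
      · left
        refine Prod.ext rfl (Prod.ext rfl ?_)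
        rw [hd, dcoset_Ii, dcoset_Ii, leftCoset_self hg, leftCoset_self (one_mem Ii)]
      · right; left
        refine Prod.ext rfl (Prod.ext rfl ?_)
        rw [hd, dcoset_Ii, dcoset_Ii]
        exact leftCoset_eq (jinv_mul_mem hg)
    · exfalso
      have hsub : (fun s => g * s * g⁻¹) '' Si ∪ (T : Set GQ) ⊆ (Ii : Set GQ) := by
        rw [himg_conj, Si_eq]
        exact Set.union_subset subset_rfl hT
      have : (⊤ : Subgroup GQ) ≤ Ii := by
        rw [← hclosH, Subgroup.closure_le]
        exact hsub
      exact jQ_notin_Ii (this (Subgroup.mem_top jQ))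
  · have hH : H = ⊤ := top_unique hNH
    subst hH
    right; right
    refine Prod.ext rfl (Prod.ext rfl ?_)
    rw [hd, dcoset_top, dcoset_top]

lemma conj_t1_t2 : conjTriple jQ (Ii, Ii, dcoset Si Ii 1) = (Ii, Ii, dcoset Si Ii jQ) := by
  refine Prod.ext ?_ (Prod.ext ?_ ?_)
  · exact conj_Ii_map jQ
  · exact conj_Ii_map jQ
  · show (fun y => jQ * y) '' dcoset Si Ii 1 = dcoset Si Ii jQ
    rw [conj_dcoset_Ii, mul_one]

lemma conj_t2_t1 : conjTriple njQ (Ii, Ii, dcoset Si Ii jQ) = (Ii, Ii, dcoset Si Ii 1) := by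
  refine Prod.ext ?_ (Prod.ext ?_ ?_)
  · exact conj_Ii_map njQ
  · exact conj_Ii_map njQ
  · show (fun y => njQ * y) '' dcoset Si Ii jQ = dcoset Si Ii 1
    rw [conj_dcoset_Ii, gm_nj_j]

lemma mem_t1 : (Ii, Ii, dcoset Si Ii 1) ∈ STriples Si Si := ⟨1, rfl, adm_t1⟩
lemma mem_t3 : ((⊤ : Subgroup GQ), (⊤ : Subgroup GQ), dcoset Si (⊤ : Subgroup GQ) 1) ∈
    STriples Si Si := ⟨1, rfl, adm_t3⟩

/-- The conjugation relation on `S_{Q,⟨i⟩,⟨i⟩}`. -/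
def relC : ↥(STriples Si Si) → ↥(STriples Si Si) → Prop := fun p q =>
  ∃ x : GQ, (q : Subgroup GQ × Subgroup GQ × Set GQ) = conjTriple x ↑p

/-- Invariant distinguishing the two conjugacy classes. -/
noncomputable def fB : ↥(STriples Si Si) → Bool := fun p =>
  @ite _ ((p : Subgroup GQ × Subgroup GQ × Set GQ).1 = Ii) (Classical.dec _) true false

lemma fB_true {z : ↥(STriples Si Si)} (h : (z : Subgroup GQ × Subgroup GQ × Set GQ).1 = Ii) :
    fB z = true := if_pos h

lemma fB_false {z : ↥(STriples Si Si)}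
    (h : (z : Subgroup GQ × Subgroup GQ × Set GQ).1 = ⊤) : fB z = false :=
  if_neg (by rw [h]; exact fun e => Ii_ne_top e.symm)

lemma p1_cases (z : ↥(STriples Si Si)) :
    (z : Subgroup GQ × Subgroup GQ × Set GQ).1 = Ii ∨
    (z : Subgroup GQ × Subgroup GQ × Set GQ).1 = ⊤ := by
  rcases STriples_sub _ z.2 with h | h | h
  · exact Or.inl (by rw [h])
  · exact Or.inl (by rw [h])
  · exact Or.inr (by rw [h])

lemma fB_resp : ∀ p q, relC p q → fB p = fB q := by
  rintro p q ⟨x, hx⟩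
  have h1 : (q : Subgroup GQ × Subgroup GQ × Set GQ).1 =
      Subgroup.map (MulAut.conj x).toMonoidHom (p : Subgroup GQ × Subgroup GQ × Set GQ).1 := by
    rw [hx]; rfl
  rcases p1_cases p with h | h
  · rw [fB_true h, fB_true (by rw [h1, h, conj_Ii_map])]
  · rw [fB_false h, fB_false (by rw [h1, h, conj_top_map])]

lemma cls (z : ↥(STriples Si Si)) :
    (Quot.mk relC z = Quot.mk relC ⟨(Ii, Ii, dcoset Si Ii 1), mem_t1⟩ ∧ fB z = true) ∨
    (Quot.mk relC z = Quot.mk relC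
      ⟨((⊤ : Subgroup GQ), (⊤ : Subgroup GQ), dcoset Si (⊤ : Subgroup GQ) 1), mem_t3⟩ ∧
      fB z = false) := by
  rcases STriples_sub _ z.2 with h | h | h
  · exact Or.inl ⟨by congr 1; exact Subtype.ext h, fB_true (by rw [h])⟩
  · left
    constructor
    · exact Quot.sound ⟨njQ, by rw [h]; exact conj_t2_t1.symm⟩
    · exact fB_true (by rw [h])
  · exact Or.inr ⟨by congr 1; exact Subtype.ext h, fB_false (by rw [h])⟩

lemma gB_bij : Function.Bijective (Quot.lift fB fB_resp) := by
  constructor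
  · intro a b
    induction a using Quot.ind with | _ p => ?_
    induction b using Quot.ind with | _ q => ?_
    intro h
    have h' : fB p = fB q := h
    rcases cls p with ⟨hp, hfp⟩ | ⟨hp, hfp⟩ <;> rcases cls q with ⟨hq, hfq⟩ | ⟨hq, hfq⟩
    · exact hp.trans hq.symm
    · rw [hfp, hfq] at h'; cases h'
    · rw [hfp, hfq] at h'; cases h'
    · exact hp.trans hq.symm
  · intro b
    cases b
    · exact ⟨Quot.mk relC ⟨_, mem_t3⟩, fB_false rfl⟩
    · exact ⟨Quot.mk relC ⟨_, mem_t1⟩, fB_true rfl⟩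


/-- The quotient `S_{Q,⟨i⟩,⟨i⟩}/conj` has exactly 2 elements, represented by
`(⟨i⟩,⟨i⟩,[1])` and `(Q,Q,[1])`; in particular `(⟨i⟩,⟨i⟩,[1])` and `(⟨i⟩,⟨i⟩,[j])`
become identified under conjugation. -/
theorem statement14 :
    Nat.card (Quot (fun p q : ↥(STriples Si Si) =>
      ∃ x : GQ, (q : Subgroup GQ × Subgroup GQ × Set GQ) = conjTriple x ↑p)) = 2 ∧
    (Ii, Ii, dcoset Si Ii 1) ∈ STriples Si Si ∧
    (⊤, ⊤, dcoset Si (⊤ : Subgroup GQ) 1) ∈ STriples Si Si ∧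
    (¬ ∃ x : GQ, conjTriple x (Ii, Ii, dcoset Si Ii 1) =
      (⊤, ⊤, dcoset Si (⊤ : Subgroup GQ) 1)) ∧
    (∃ x : GQ, conjTriple x (Ii, Ii, dcoset Si Ii 1) = (Ii, Ii, dcoset Si Ii jQ)) := by
  refine ⟨?_, mem_t1, mem_t3, ?_, ⟨jQ, conj_t1_t2⟩⟩
  · show Nat.card (Quot relC) = 2
    rw [Nat.card_congr (Equiv.ofBijective _ gB_bij)]
    simp [Nat.card_eq_fintype_card]
  · rintro ⟨x, hx⟩
    have h1 : Subgroup.map (MulAut.conj x).toMonoidHom Ii = ⊤ := congrArg Prod.fst hx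
    rw [conj_Ii_map] at h1
    exact Ii_ne_top h1
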